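/- arXiv:0904.2893 — 9 statements merged into one kernel-verified Lean document; each statement's English description precedes it below -/
import Mathlib

section
/- Let S be a finite semigroup satisfying the pseudoidentity (xy)^ω x (xy)^ω = (xy)^ω for all x, y ∈ S. Then every regular element of S is idempotent. -/
/-- `spow s n` is `s^(n+1)`. -/
def spow {S : Type*} [Semigroup S] (s : S) : ℕ → S
  | 0 => s
  | n + 1 => spow s n * s

/-- If a finite semigroup satisfies `(xy)^ω x (xy)^ω = (xy)^ω`, then every
regular element is idempotent. -/
theorem stmt3 {S : Type*} [Semigroup S] [Fintype S]
    (hDA : ∀ x y e : S, (∃ n : ℕ, spow (x * y) n = e) → IsIdempotentElem e →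
      e * x * e = e) :
    ∀ s t : S, s * t * s = s → IsIdempotentElem s := by
  intro s t hst
  have hid : IsIdempotentElem (s * t) := by
    show s * t * (s * t) = s * t
    calc s * t * (s * t) = (s * t * s) * t := by rw [mul_assoc, mul_assoc, mul_assoc]
    _ = s * t := by rw [hst]
  have h := hDA s t (s * t) ⟨0, rfl⟩ hid
  -- h : (s * t) * s * (s * t) = s * t
  have h2 : s * (s * t) = s * t := by
    calc s * (s * t) = (s * t * s) * (s * t) := by rw [hst]
    _ = s * t := h
  show s * s = s
  calc s * s = s * (s * t * s) := by rw [hst]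
  _ = (s * (s * t)) * s := by rw [mul_assoc s (s * t) s]
  _ = (s * t) * s := by rw [h2]
  _ = s := hst
end

section
/- Let S be a finite semigroup in which every regular element is idempotent. Then S satisfies (xy)^ω x (xy)^ω = (xy)^ω for all x, y ∈ S. -/
lemma spow_succ {S : Type*} [Semigroup S] (s : S) (n : ℕ) :
    spow s (n + 1) = spow s n * s := rfl

lemma spow_succ' {S : Type*} [Semigroup S] (s : S) (n : ℕ) :
    spow s (n + 1) = s * spow s n := by
  induction n with
  | zero => rfl
  | succ k ih => rw [spow_succ s (k + 1), ih, mul_assoc, ← spow_succ, ih]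

lemma spow_add {S : Type*} [Semigroup S] (s : S) (m n : ℕ) :
    spow s m * spow s n = spow s (m + n + 1) := by
  induction n with
  | zero => rfl
  | succ k ih =>
    rw [spow_succ, ← mul_assoc, ih]
    rfl

/-- If every regular element of a finite semigroup is idempotent, then the
semigroup satisfies `(xy)^ω x (xy)^ω = (xy)^ω`. -/
theorem stmt4 {S : Type*} [Semigroup S] [Fintype S]
    (hreg : ∀ s : S, (∃ t : S, s * t * s = s) → IsIdempotentElem s) :
    ∀ x y e : S, (∃ n : ℕ, spow (x * y) n = e) → IsIdempotentElem e →
      e * x * e = e := by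
  rintro x y e ⟨n, rfl⟩ hid
  set z := x * y with hz
  set E := spow z n with hEdef
  have hid' : E * E = E := hid
  -- spow z (2n+1) = E
  have hnn : spow z (2 * n + 1) = E := by
    have h := spow_add z n n
    rw [hid'] at h
    rw [show 2 * n + 1 = n + n + 1 by ring]
    exact h.symm
  -- exponent shift lemma
  have hstep : ∀ j : ℕ, spow z (2 * n + 1 + j) = spow z (n + j) := by
    intro j
    induction j with
    | zero => simpa using hnn
    | succ k ih =>
      rw [show 2 * n + 1 + (k + 1) = (2 * n + 1 + k) + 1 by ring, spow_succ, ih,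
        show n + (k + 1) = (n + k) + 1 by ring, spow_succ]
  -- E * z = spow z (n+1)
  have hEz : E * z = spow z (n + 1) := by rw [spow_succ]
  set B := spow z (4 * n + 2) with hBdef
  -- z * B = E and B * z = E
  have hzB : z * B = E := by
    rw [hBdef, ← spow_succ', show 4 * n + 2 + 1 = 2 * n + 1 + (2 * n + 2) by ring,
      hstep, show n + (2 * n + 2) = 2 * n + 1 + (n + 1) by ring, hstep,
      show n + (n + 1) = 2 * n + 1 by ring, hnn]
  have hBz : B * z = E := by
    rw [hBdef, ← spow_succ, show 4 * n + 2 + 1 = 2 * n + 1 + (2 * n + 2) by ring,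
      hstep, show n + (2 * n + 2) = 2 * n + 1 + (n + 1) by ring, hstep,
      show n + (n + 1) = 2 * n + 1 by ring, hnn]
  -- E * B = B
  have hEB : E * B = B := by
    rw [hEdef, hBdef, spow_add, show n + (4 * n + 2) + 1 = 2 * n + 1 + (3 * n + 2) by ring,
      hstep, show n + (3 * n + 2) = 4 * n + 2 by ring]
  -- E * spow z (2 * n) * ... : z * spow z (2n) = spow z (2n+1)
  -- Step 1 : a := E * x is regular, hence idempotent
  have haa : E * x * (E * x) = E * x := by
    apply hreg
    refine ⟨y * spow z (2 * n), ?_⟩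
    have hat : E * x * (y * spow z (2 * n)) = E := by
      rw [mul_assoc, ← mul_assoc x, ← hz, ← spow_succ', hnn, hid']
    rw [hat, ← mul_assoc, hid']
  -- Step 2 : b := B * x is regular, hence idempotent
  have hbb : B * x * (B * x) = B * x := by
    apply hreg
    refine ⟨y, ?_⟩
    have hby : B * x * y = E := by rw [mul_assoc, ← hz, hBz]
    rw [hby, ← mul_assoc, hEB]
  -- Step 3 : E * x * E = spow z (n+1)
  have eqA : E * x * E = spow z (n + 1) := by
    have h1 : E * x * B * x = E * x := by
      have h := congrArg (fun w => z * w) hbb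
      simp only [← mul_assoc] at h
      rwa [hzB] at h
    have h2 := congrArg (fun w => w * y) h1
    rw [mul_assoc _ x y, ← hz, mul_assoc _ B z, hBz] at h2
    rw [mul_assoc E x y, ← hz, hEz] at h2
    exact h2
  -- Step 4 : spow z (n+2) = spow z (n+1)
  have eqB : spow z (n + 2) = spow z (n + 1) := by
    have h := congrArg (fun w => w * y) haa
    simp only [mul_assoc] at h
    rw [← hz] at h
    simp only [← mul_assoc] at h
    rw [eqA, hEz, ← spow_succ] at h
    exact h
  -- Step 5 : spow z (n+1+j) = spow z (n+1) for all j
  have step5 : ∀ j : ℕ, spow z (n + 1 + j) = spow z (n + 1) := by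
    intro j
    induction j with
    | zero => rfl
    | succ k ih =>
      rw [show n + 1 + (k + 1) = (n + 1 + k) + 1 by ring, spow_succ, ih, ← spow_succ]
      exact eqB
  have hfin : spow z (n + 1) = E := by
    rw [← hnn, show 2 * n + 1 = n + 1 + n by ring, step5]
  rw [eqA, hfin]
end

section
/- Let S be a finite semigroup satisfying (xy)^ω x (xy)^ω x = (xy)^ω x for all x,y ∈ S. Then S satisfies (xy)^ω x (xy)^ω = (xy)^ω for all x,y ∈ S. -/
/-- If a finite semigroup satisfies `(xy)^ω x (xy)^ω x = (xy)^ω x`, then it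
satisfies `(xy)^ω x (xy)^ω = (xy)^ω`. -/
theorem stmt5 {S : Type*} [Semigroup S] [Fintype S]
    (h : ∀ x y e : S, (∃ n : ℕ, spow (x * y) n = e) → IsIdempotentElem e →
      e * x * e * x = e * x) :
    ∀ x y e : S, (∃ n : ℕ, spow (x * y) n = e) → IsIdempotentElem e →
      e * x * e = e := by
  intro x y e hn he
  obtain ⟨n, hn⟩ := hn
  have key := h x y e ⟨n, hn⟩ he
  obtain ⟨t, hxt⟩ : ∃ t : S, x * t = e := by
    cases n with
    | zero => exact ⟨y, hn⟩
    | succ m => exact ⟨y * spow (x * y) m, by rw [← mul_assoc, ← spow_succ', hn]⟩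
  calc e * x * e = e * x * e * (x * t) := by rw [hxt, mul_assoc _ e e, he]
    _ = e * x * e * x * t := (mul_assoc _ x t).symm
    _ = e * x * t := by rw [key]
    _ = e * (x * t) := mul_assoc _ _ _
    _ = e := by rw [hxt, he]
end

section
/- Let M be a finite semigroup and define, for s,t ∈ M: s ∼_K t iff for every idempotent e ∈ M, either both e*s and e*t generate two-sided ideals strictly smaller than the two-sided ideal generated by e, or e*s = e*t. Then ∼_K is a congruence on M (an equivalence relation compatible with multiplication on both sides). -/
/-- The two-sided ideal generated by `x`: `{x} ∪ Mx ∪ xM ∪ MxM`. -/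
def Jideal {M : Type*} [Semigroup M] (x : M) : Set M :=
  {z | z = x ∨ (∃ m, z = m * x) ∨ (∃ m, z = x * m) ∨ ∃ m n, z = m * x * n}

/-- `x ≤_J y`. -/
def leJ {M : Type*} [Semigroup M] (x y : M) : Prop := Jideal x ⊆ Jideal y

/-- `x <_J y`: strict containment of generated two-sided ideals. -/
def ltJ {M : Type*} [Semigroup M] (x y : M) : Prop := leJ x y ∧ ¬ leJ y x

/-- The relation `∼_K`. -/
def simK {M : Type*} [Semigroup M] (s t : M) : Prop :=
  ∀ e : M, IsIdempotentElem e →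
    (ltJ (e * s) e ∧ ltJ (e * t) e) ∨ e * s = e * t

namespace Stmt6Aux

variable {M : Type*} [Semigroup M]

theorem mem_self (x : M) : x ∈ Jideal x := Or.inl rfl

theorem mul_mem_left {x z : M} (h : z ∈ Jideal x) (m : M) : m * z ∈ Jideal x := by
  rcases h with h | ⟨a, h⟩ | ⟨a, h⟩ | ⟨a, b, h⟩ <;> subst h
  · exact Or.inr (Or.inl ⟨m, rfl⟩)
  · exact Or.inr (Or.inl ⟨m * a, by simp [mul_assoc]⟩)
  · exact Or.inr (Or.inr (Or.inr ⟨m, a, by simp [mul_assoc]⟩))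
  · exact Or.inr (Or.inr (Or.inr ⟨m * a, b, by simp [mul_assoc]⟩))

theorem mul_mem_right {x z : M} (h : z ∈ Jideal x) (m : M) : z * m ∈ Jideal x := by
  rcases h with h | ⟨a, h⟩ | ⟨a, h⟩ | ⟨a, b, h⟩ <;> subst h
  · exact Or.inr (Or.inr (Or.inl ⟨m, rfl⟩))
  · exact Or.inr (Or.inr (Or.inr ⟨a, m, rfl⟩))
  · exact Or.inr (Or.inr (Or.inl ⟨a * m, by simp [mul_assoc]⟩))
  · exact Or.inr (Or.inr (Or.inr ⟨a, b * m, by simp [mul_assoc]⟩))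

theorem leJ_of_mem {x z : M} (h : z ∈ Jideal x) : leJ z x := by
  intro w hw
  rcases hw with hw | ⟨a, hw⟩ | ⟨a, hw⟩ | ⟨a, b, hw⟩ <;> subst hw
  · exact h
  · exact mul_mem_left h a
  · exact mul_mem_right h a
  · exact mul_mem_right (mul_mem_left h a) b

theorem leJ_trans {x y z : M} (h1 : leJ x y) (h2 : leJ y z) : leJ x z :=
  Set.Subset.trans h1 h2

/-- `a ^ (n+1)` for a semigroup. -/
def pw (a : M) : ℕ → M
  | 0 => a
  | n + 1 => pw a n * a

theorem pw_succ' (a : M) (n : ℕ) : pw a (n + 1) = a * pw a n := by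
  induction n with
  | zero => rfl
  | succ c ih =>
    show pw a (c + 1) * a = a * (pw a c * a)
    rw [ih, mul_assoc]

theorem pw_add (a : M) (m n : ℕ) : pw a (m + n + 1) = pw a m * pw a n := by
  induction n with
  | zero => rfl
  | succ c ih =>
    show pw a (m + c + 1) * a = pw a m * (pw a c * a)
    rw [ih, mul_assoc]

theorem exists_idem [Finite M] (a : M) : ∃ j, IsIdempotentElem (pw a j) := by
  suffices H : ∀ i j : ℕ, i < j → pw a i = pw a j → ∃ k, IsIdempotentElem (pw a k) by
    obtain ⟨i, j, hne, hij⟩ := Finite.exists_ne_map_eq_of_infinite (pw a)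
    rcases Nat.lt_or_ge i j with hlt | hge
    · exact H i j hlt hij
    · exact H j i (lt_of_le_of_ne hge hne.symm) hij.symm
  intro i j hlt heq
  set p := j - i with hp_def
  have hp : 0 < p := by omega
  have hshift : ∀ k, pw a (i + p + k) = pw a (i + k) := by
    intro k
    induction k with
    | zero =>
      have : i + p = j := by omega
      rw [this]; exact heq.symm
    | succ c ih =>
      show pw a (i + p + c) * a = pw a (i + c) * a
      rw [ih]
    
  have hshift' : ∀ t k, pw a (i + t * p + k) = pw a (i + k) := by
    intro t
    induction t with
    | zero => simp
    | succ c ih =>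
      intro k
      have e1 : i + (c + 1) * p + k = i + p + (c * p + k) := by ring
      have e2 : i + (c * p + k) = i + c * p + k := by ring
      rw [e1, hshift (c * p + k), e2, ih k]
  have hple : i + 1 ≤ (i + 1) * p := Nat.le_mul_of_pos_right (i + 1) hp
  refine ⟨i + ((i + 1) * p - (i + 1)), ?_⟩
  show pw a (i + ((i + 1) * p - (i + 1))) * pw a (i + ((i + 1) * p - (i + 1)))
      = pw a (i + ((i + 1) * p - (i + 1)))
  rw [← pw_add]
  have e3 : i + ((i + 1) * p - (i + 1)) + (i + ((i + 1) * p - (i + 1))) + 1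
      = i + (i + 1) * p + ((i + 1) * p - (i + 1)) := by omega
  rw [e3, hshift' (i + 1) ((i + 1) * p - (i + 1))]

theorem lemmaA [Finite M] {a m v : M} (h : a = m * (a * v)) :
    (∃ y, a * v * y = a) ∨ a * v = a := by
  have hj : ∀ j, a = pw m j * a * pw v j := by
    intro j
    induction j with
    | zero => rw [← mul_assoc] at h; exact h
    | succ c ih =>
      calc a = pw m c * a * pw v c := ih
        _ = pw m c * (m * (a * v)) * pw v c := by rw [← h]
        _ = (pw m c * m) * a * (v * pw v c) := by simp [mul_assoc]
        _ = pw m (c + 1) * a * pw v (c + 1) := by rw [pw_succ' v c]; rfl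
  obtain ⟨j, hf⟩ := exists_idem m
  have h1 : a = pw m j * a * pw v j := hj j
  have h2 : pw m j * a = a := by
    conv_lhs => rw [h1]
    conv_rhs => rw [h1]
    have hff : pw m j * pw m j = pw m j := hf
    calc pw m j * (pw m j * a * pw v j) = (pw m j * pw m j) * a * pw v j := by
          simp [mul_assoc]
      _ = pw m j * a * pw v j := by rw [hff]
  have h3 : a = a * pw v j := by rw [h2] at h1; exact h1
  cases j with
  | zero => exact Or.inr h3.symm
  | succ c =>
    refine Or.inl ⟨pw v c, ?_⟩
    rw [pw_succ'] at h3
    rw [← mul_assoc] at h3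
    exact h3.symm

theorem key [Finite M] {e u : M} (he : IsIdempotentElem e) (h : e ∈ Jideal (e * u)) :
    ∃ x, e * u * x = e := by
  rcases h with h | ⟨a, h⟩ | ⟨a, h⟩ | ⟨a, b, h⟩
  · exact ⟨e, by rw [← h]; exact he⟩
  · rcases lemmaA h with ⟨y, hy⟩ | hy
    · exact ⟨y, hy⟩
    · exact ⟨e, by rw [hy]; exact he⟩
  · exact ⟨a, h.symm⟩
  · have h' : e = a * (e * (u * b)) := by
      calc e = a * (e * u) * b := h
        _ = a * (e * (u * b)) := by simp [mul_assoc]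
    rcases lemmaA h' with ⟨y, hy⟩ | hy
    · refine ⟨b * y, ?_⟩
      calc e * u * (b * y) = e * (u * b) * y := by simp [mul_assoc]
        _ = e := hy
    · refine ⟨b, ?_⟩
      calc e * u * b = e * (u * b) := by rw [mul_assoc]
        _ = e := hy

end Stmt6Aux

open Stmt6Aux in
/-- `∼_K` is a congruence on a finite semigroup: an equivalence relation
compatible with multiplication on both sides. -/
theorem stmt6 {M : Type*} [Semigroup M] [Fintype M] :
    Equivalence (simK (M := M)) ∧
      ∀ s t u : M, simK s t → simK (u * s) (u * t) ∧ simK (s * u) (t * u) := by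
  constructor
  · refine ⟨fun s e he => Or.inr rfl, ?_, ?_⟩
    · intro s t h e he
      rcases h e he with ⟨h1, h2⟩ | h
      · exact Or.inl ⟨h2, h1⟩
      · exact Or.inr h.symm
    · intro s t u hst htu e he
      rcases hst e he with ⟨h1, h2⟩ | h
      · rcases htu e he with ⟨h3, h4⟩ | h'
        · exact Or.inl ⟨h1, h4⟩
        · exact Or.inl ⟨h1, h' ▸ h2⟩
      · rcases htu e he with ⟨h3, h4⟩ | h'
        · exact Or.inl ⟨by rw [h]; exact h3, h4⟩
        · exact Or.inr (h.trans h')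
  · intro s t u h
    constructor
    · -- simK (u * s) (u * t)
      intro e he
      by_cases hle : leJ e (e * u)
      · obtain ⟨x, hx⟩ := key he (hle (mem_self e))
        have hfe : IsIdempotentElem (x * (e * u)) := by
          show (x * (e * u)) * (x * (e * u)) = x * (e * u)
          calc (x * (e * u)) * (x * (e * u)) = x * ((e * u * x) * (e * u)) := by
                simp [mul_assoc]
            _ = x * (e * (e * u)) := by rw [hx]
            _ = x * ((e * e) * u) := by rw [← mul_assoc e e u]
            _ = x * (e * u) := by rw [he]
        have heuf : e * u * (x * (e * u)) = e * u := by
          calc e * u * (x * (e * u)) = (e * u * x) * (e * u) := by simp [mul_assoc]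
            _ = e * (e * u) := by rw [hx]
            _ = (e * e) * u := by rw [← mul_assoc e e u]
            _ = e * u := by rw [he]
        rcases h (x * (e * u)) hfe with ⟨⟨hfs1, hfs2⟩, ⟨hft1, hft2⟩⟩ | hq
        · left
          have hfJe : leJ (x * (e * u)) e :=
            leJ_of_mem (Or.inr (Or.inr (Or.inr ⟨x, u, (mul_assoc x e u).symm⟩)))
          have hmem : ∀ w : M, leJ (e * (u * w)) ((x * (e * u)) * w) := by
            intro w
            refine leJ_of_mem (Or.inr (Or.inl ⟨e * u, ?_⟩))
            calc e * (u * w) = (e * u) * w := (mul_assoc e u w).symm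
              _ = (e * u * (x * (e * u))) * w := by rw [heuf]
              _ = e * u * ((x * (e * u)) * w) := by rw [mul_assoc]
          constructor
          · refine ⟨leJ_of_mem (Or.inr (Or.inr (Or.inl ⟨u * s, rfl⟩))), ?_⟩
            intro hcon
            exact hfs2 (leJ_trans (leJ_trans hfJe hcon) (hmem s))
          · refine ⟨leJ_of_mem (Or.inr (Or.inr (Or.inl ⟨u * t, rfl⟩))), ?_⟩
            intro hcon
            exact hft2 (leJ_trans (leJ_trans hfJe hcon) (hmem t))
        · right
          calc e * (u * s) = (e * u) * s := (mul_assoc e u s).symm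
            _ = (e * u * (x * (e * u))) * s := by rw [heuf]
            _ = (e * u) * ((x * (e * u)) * s) := by rw [mul_assoc]
            _ = (e * u) * ((x * (e * u)) * t) := by rw [hq]
            _ = (e * u * (x * (e * u))) * t := by simp [mul_assoc]
            _ = (e * u) * t := by rw [heuf]
            _ = e * (u * t) := mul_assoc e u t
      · left
        have hdown : ∀ w : M, leJ (e * (u * w)) (e * u) := fun w =>
          leJ_of_mem (Or.inr (Or.inr (Or.inl ⟨w, (mul_assoc e u w).symm⟩)))
        constructor
        · refine ⟨leJ_of_mem (Or.inr (Or.inr (Or.inl ⟨u * s, rfl⟩))), ?_⟩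
          intro hcon
          exact hle (leJ_trans hcon (hdown s))
        · refine ⟨leJ_of_mem (Or.inr (Or.inr (Or.inl ⟨u * t, rfl⟩))), ?_⟩
          intro hcon
          exact hle (leJ_trans hcon (hdown t))
    · -- simK (s * u) (t * u)
      intro e he
      rcases h e he with ⟨⟨h1, h2⟩, ⟨h3, h4⟩⟩ | hq
      · left
        have hdown : ∀ w : M, leJ (e * (w * u)) (e * w) := fun w =>
          leJ_of_mem (Or.inr (Or.inr (Or.inl ⟨u, (mul_assoc e w u).symm⟩)))
        constructor
        · refine ⟨leJ_of_mem (Or.inr (Or.inr (Or.inl ⟨s * u, rfl⟩))), ?_⟩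
          intro hcon
          exact h2 (leJ_trans hcon (hdown s))
        · refine ⟨leJ_of_mem (Or.inr (Or.inr (Or.inl ⟨t * u, rfl⟩))), ?_⟩
          intro hcon
          exact h4 (leJ_trans hcon (hdown t))
      · right
        rw [← mul_assoc, ← mul_assoc, hq]
end

section
/- Let M be a finite semigroup and ∼_K the congruence defined by: s ∼_K t iff for every idempotent e, either es, et <_J e or es = et. Then the canonical projection M → M/∼_K is a K-morphism: for every idempotent f of M/∼_K, the preimage of f is a subsemigroup satisfying x^ω y = x^ω for all its elements x, y. -/
/-- The projection `M → M/∼_K` is a `K`-morphism: for every idempotent `f` of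
the quotient, its preimage is a subsemigroup satisfying `x^ω y = x^ω` for all
its elements. -/
theorem stmt7 {M : Type*} [Semigroup M] [Fintype M]
    (c : Con M) (hc : ∀ s t : M, c s t ↔ simK s t)
    (f : c.Quotient) (hf : IsIdempotentElem f) :
    (∀ x y : M, (x : c.Quotient) = f → (y : c.Quotient) = f →
      (((x * y : M) : c.Quotient) = f)) ∧
    ∀ x y : M, (x : c.Quotient) = f → (y : c.Quotient) = f →
      ∀ e : M, (∃ n : ℕ, spow x n = e) → IsIdempotentElem e → e * y = e := by
  constructor
  · intro x y hx hy
    have : ((x*y : M) : c.Quotient) = (x : c.Quotient) * y := rfl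
    rw [this, hx, hy, hf]
  · intro x y hx hy e ⟨n, hn⟩ he
    have hcast : ∀ m : ℕ, ((spow x m : M) : c.Quotient) = f := by
      intro m
      induction m with
      | zero => exact hx
      | succ k ih =>
        show ((spow x k * x : M) : c.Quotient) = f
        have : ((spow x k * x : M) : c.Quotient) = ((spow x k : M) : c.Quotient) * x := rfl
        rw [this, ih, hx, hf]
    have hef : ((e : M) : c.Quotient) = f := hn ▸ hcast n
    have hcey : c e y := c.eq.mp (hef.trans hy.symm)
    have hsim : simK e y := (hc e y).mp hcey
    rcases hsim e he with ⟨⟨_, hnot⟩, _⟩ | heq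
    · exact absurd (show leJ e (e*e) by rw [he]; exact subset_rfl) hnot
    · rw [← heq, he]
end

section
/- Let M be a finite band (every element idempotent) that belongs to the Mal'cev product K ∘ V for a class V of finite semigroups, witnessed by the congruence ∼_K (s ∼_K t iff for all idempotents e, es,et <_J e or es = et) with M/∼_K ∈ V. Then each ∼_K-class of M is a left-zero subsemigroup of M: for s ∼_K t in the same class, s*t = s. -/
/-- In a finite band, each `∼_K`-class is a left-zero subsemigroup:
if `s ∼_K t` then `s * t = s`. -/
theorem stmt11 {M : Type*} [Semigroup M] [Fintype M]
    (hband : ∀ x : M, IsIdempotentElem x) :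
    ∀ s t : M, simK s t → s * t = s := by
  intro s t h
  have := h s (hband s)
  rw [hband s] at this
  rcases this with ⟨⟨_, hns⟩, _⟩ | heq
  · exact absurd (le_refl (Jideal s)) hns
  · exact heq.symm
end

section
/- Let M be a finite semigroup satisfying (xy)^ω x (xy)^ω = (xy)^ω (i.e., M ∈ DA). For every idempotent e of M, let M_e be the subsemigroup generated by all elements x with x ≥_J e (the ideal generated by x contains the ideal generated by e). Then e * m * e = e for all m ∈ M_e. -/
/-- `x ≥_J e`: `e` lies in the two-sided ideal generated by `x`. -/
def geJ {M : Type*} [Semigroup M] (x e : M) : Prop :=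
  e = x ∨ (∃ m, e = m * x) ∨ (∃ m, e = x * m) ∨ ∃ m n, e = m * x * n

section Aux

variable {M : Type*} [Semigroup M]

/-- From `e*a*b*e = e`, deduce `e*a*e = e` (uses the DA identity once). -/
lemma aux_l1
    (hDA : ∀ x y e : M, (∃ n : ℕ, spow (x * y) n = e) → IsIdempotentElem e →
      e * x * e = e)
    {e : M} (he : IsIdempotentElem e) (a b : M)
    (h : e * a * b * e = e) : e * a * e = e := by
  have h0 : spow ((e * a) * (b * e)) 0 = e := by
    show (e * a) * (b * e) = e
    rw [← mul_assoc]; exact h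
  have key := hDA (e * a) (b * e) e ⟨0, h0⟩ he
  -- key : e * (e * a) * e = e
  rwa [← mul_assoc, he] at key

/-- From `e*a*b*e = e`, deduce `e*b*e = e` (uses the DA identity once). -/
lemma aux_l2
    (hDA : ∀ x y e : M, (∃ n : ℕ, spow (x * y) n = e) → IsIdempotentElem e →
      e * x * e = e)
    {e : M} (he : IsIdempotentElem e) (a b : M)
    (h : e * a * b * e = e) : e * b * e = e := by
  have h' : ∀ t : M, e * (a * (b * (e * t))) = e * t := by
    intro t
    calc e * (a * (b * (e * t))) = (e * a * b * e) * t := by simp [mul_assoc]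
    _ = e * t := by rw [h]
  have hr : e * (a * (b * e)) = e := by
    rw [← mul_assoc, ← mul_assoc]; exact h
  have hw : IsIdempotentElem (b * e * a) := by
    show b * e * a * (b * e * a) = b * e * a
    calc b * e * a * (b * e * a) = b * (e * (a * (b * (e * a)))) := by simp [mul_assoc]
    _ = b * (e * a) := by rw [h' a]
    _ = b * e * a := by rw [mul_assoc]
  have key := hDA (b * e) a (b * e * a) ⟨0, rfl⟩ hw
  -- key : (b*e*a) * (b*e) * (b*e*a) = b*e*a
  have key2 := congrArg (fun t => (e * a) * t * (b * e)) key
  simp only [mul_assoc] at key2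
  simp only [h'] at key2
  simp only [hr] at key2
  -- key2 : e * (b * e) = e
  rw [← mul_assoc] at key2
  exact key2

/-- Multiplicativity: if `e*u*e = e` and `e*v*e = e` then `e*(u*v)*e = e`. -/
lemma aux_mul
    (hDA : ∀ x y e : M, (∃ n : ℕ, spow (x * y) n = e) → IsIdempotentElem e →
      e * x * e = e)
    {e : M} (he : IsIdempotentElem e) (u v : M)
    (hu : e * u * e = e) (hv : e * v * e = e) : e * (u * v) * e = e := by
  have he' : ∀ t : M, e * (e * t) = e * t := by
    intro t; rw [← mul_assoc, he]
  have hu' : ∀ t : M, e * (u * (e * t)) = e * t := by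
    intro t
    calc e * (u * (e * t)) = (e * u * e) * t := by simp [mul_assoc]
    _ = e * t := by rw [hu]
  have hv' : ∀ t : M, e * (v * (e * t)) = e * t := by
    intro t
    calc e * (v * (e * t)) = (e * v * e) * t := by simp [mul_assoc]
    _ = e * t := by rw [hv]
  have hvr : e * (v * e) = e := by rw [← mul_assoc]; exact hv
  have hq : IsIdempotentElem (v * e) := by
    show v * e * (v * e) = v * e
    rw [mul_assoc, ← mul_assoc e v e, hv]
  have h0 : spow ((v * e * (e * u)) * e) 0 = v * e := by
    show (v * e * (e * u)) * e = v * e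
    calc (v * e * (e * u)) * e = v * (e * (e * (u * e))) := by simp [mul_assoc]
    _ = v * (e * (u * e)) := by rw [he']
    _ = v * ((e * u) * e) := by rw [mul_assoc]
    _ = v * e := by rw [hu]
  have key := hDA (v * e * (e * u)) e (v * e) ⟨0, h0⟩ hq
  -- key : (v*e) * (v*e*(e*u)) * (v*e) = v*e
  have key2 := congrArg (fun t => e * t) key
  simp only [mul_assoc] at key2
  simp only [he', hu', hv'] at key2
  simp only [hvr] at key2
  -- hopefully key2 : e * (u * (v * e)) = e
  calc e * (u * v) * e = e * (u * (v * e)) := by simp [mul_assoc]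
  _ = e := key2

end Aux

/-- In a finite semigroup `M ∈ DA`, for every idempotent `e`, the subsemigroup
`M_e` generated by the elements J-above `e` satisfies `e * m * e = e`. -/
theorem stmt12 {M : Type*} [Semigroup M] [Fintype M]
    (hDA : ∀ x y e : M, (∃ n : ℕ, spow (x * y) n = e) → IsIdempotentElem e →
      e * x * e = e)
    (e : M) (he : IsIdempotentElem e) :
    ∀ m ∈ Subsemigroup.closure {x : M | geJ x e}, e * m * e = e := by
  intro m hm
  induction hm using Subsemigroup.closure_induction with
  | mul u v _ _ hu hv => exact aux_mul hDA he u v hu hv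
  | mem x hx =>
    rcases hx with h | ⟨m', h⟩ | ⟨m', h⟩ | ⟨m', n', h⟩
    · rw [← h, he, he]
    · -- e = m' * x
      have h1 : e * m' * x * e = e := by
        rw [mul_assoc e m' x, ← h, he, he]
      exact aux_l2 hDA he m' x h1
    · -- e = x * m'
      have h1 : e * x * m' * e = e := by
        rw [mul_assoc e x m', ← h, he, he]
      exact aux_l1 hDA he x m' h1
    · -- e = m' * x * n'
      have h1 : e * m' * (x * n') * e = e := by
        rw [mul_assoc e m', ← mul_assoc m' x n', ← h, he, he]
      have h2 := aux_l2 hDA he m' (x * n') h1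
      have h3 : e * x * n' * e = e := by
        rw [mul_assoc e x n']; exact h2
      exact aux_l1 hDA he x n' h3
end

section
/- Conversely, let M be a finite semigroup such that for every idempotent e, e*m*e = e for all m in the subsemigroup M_e generated by the elements J-above e. Then M satisfies (xy)^ω x (xy)^ω = (xy)^ω. -/
/-- If, in a finite semigroup `M`, for every idempotent `e` we have
`e * m * e = e` for all `m` in the subsemigroup generated by the elements
J-above `e`, then `M` satisfies `(xy)^ω x (xy)^ω = (xy)^ω`. -/
theorem stmt13 {M : Type*} [Semigroup M] [Fintype M]
    (h : ∀ e : M, IsIdempotentElem e →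
      ∀ m ∈ Subsemigroup.closure {x : M | geJ x e}, e * m * e = e) :
    ∀ x y e : M, (∃ n : ℕ, spow (x * y) n = e) → IsIdempotentElem e →
      e * x * e = e := by
  rintro x y e ⟨n, hn⟩ he
  have hgeJ : geJ x e := by
    cases n with
    | zero =>
        right; right; left
        exact ⟨y, hn.symm⟩
    | succ m =>
        right; right; right
        refine ⟨spow (x * y) m, y, ?_⟩
        rw [← hn]
        simp [spow, mul_assoc]
  exact h e he x (Subsemigroup.subset_closure hgeJ)
end

section
/- In a finite semigroup S satisfying (xy)^ω x (xy)^ω = (xy)^ω (S ∈ DA), every regular J-class of S consists entirely of idempotents. -/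
/-- `x ≤_J y`: `x ∈ {y} ∪ Sy ∪ yS ∪ SyS`. -/
def leJmem {S : Type*} [Semigroup S] (x y : S) : Prop :=
  x = y ∨ (∃ m, x = m * y) ∨ (∃ m, x = y * m) ∨ ∃ m n, x = m * y * n

/-- In a finite monoid every element has an idempotent power (with exponent `≥ 2`). -/
lemma exists_idem_pow {M : Type*} [Monoid M] [Finite M] (u : M) :
    ∃ n, 2 ≤ n ∧ u ^ n * u ^ n = u ^ n := by
  obtain ⟨i, j, hij, hpow⟩ :=
    Finite.exists_ne_map_eq_of_infinite (fun n : ℕ => u ^ (n + 1))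
  wlog hlt : i < j generalizing i j
  · exact this j i hij.symm hpow.symm (by omega)
  set m := i + 1 with hm
  set p := j - i with hp
  have hp1 : 1 ≤ p := by omega
  have h : u ^ m = u ^ (m + p) := by
    have : j + 1 = m + p := by omega
    simpa [← this] using hpow
  have step : ∀ a, m ≤ a → u ^ (a + p) = u ^ a := by
    intro a ha
    have h1 : a + p = (a - m) + (m + p) := by omega
    have h2 : a = (a - m) + m := by omega
    rw [h1, pow_add, ← h, ← pow_add, ← h2]
  have iter : ∀ k a, m ≤ a → u ^ (a + k * p) = u ^ a := by
    intro k
    induction k with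
    | zero => simp
    | succ k ih =>
      intro a ha
      have : a + (k + 1) * p = (a + k * p) + p := by ring
      rw [this, step _ (by omega), ih a ha]
  refine ⟨2 * m * p, by nlinarith, ?_⟩
  rw [← pow_add]
  have hle : m ≤ 2 * m * p := by nlinarith
  have := iter (2 * m) (2 * m * p) hle
  simpa [mul_assoc] using this

lemma sandwich_pow {M : Type*} [Monoid M] {P X Q : M} (h : P * X * Q = X) :
    ∀ k, P ^ k * X * Q ^ k = X := by
  intro k
  induction k with
  | zero => simp
  | succ k ih =>
    calc P ^ (k+1) * X * Q ^ (k+1) = P ^ k * (P * X * Q) * Q ^ k := by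
          rw [pow_succ, pow_succ']; simp only [mul_assoc]
      _ = P ^ k * X * Q ^ k := by rw [h]
      _ = X := ih

lemma coe_spow {S : Type*} [Semigroup S] (u : S) (n : ℕ) :
    ((spow u n : S) : WithOne S) = (u : WithOne S) ^ (n + 1) := by
  induction n with
  | zero => simp [spow]
  | succ n ih => simp only [spow, WithOne.coe_mul, ih, pow_succ]

lemma coe_mul_right_absorb {S : Type*} [Semigroup S] (e : S) (w : WithOne S) :
    ∃ v : S, (e : WithOne S) * w = ↑v := by
  induction w using WithOne.recOneCoe with
  | one => exact ⟨e, mul_one _⟩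
  | coe a => exact ⟨e * a, (WithOne.coe_mul e a).symm⟩

lemma coe_mul_left_absorb {S : Type*} [Semigroup S] (e : S) (w : WithOne S) :
    ∃ v : S, w * (e : WithOne S) = ↑v := by
  induction w using WithOne.recOneCoe with
  | one => exact ⟨e, one_mul _⟩
  | coe a => exact ⟨a * e, (WithOne.coe_mul a e).symm⟩

lemma leJ_coe {S : Type*} [Semigroup S] {x y : S} (h : leJmem x y) :
    ∃ a b : WithOne S, (x : WithOne S) = a * ↑y * b := by
  rcases h with h | ⟨m, h⟩ | ⟨m, h⟩ | ⟨m, n, h⟩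
  · exact ⟨1, 1, by simp [h]⟩
  · exact ⟨↑m, 1, by simp [h, WithOne.coe_mul]⟩
  · exact ⟨1, ↑m, by simp [h, WithOne.coe_mul]⟩
  · exact ⟨↑m, ↑n, by simp [h, WithOne.coe_mul]⟩

/-- In a finite semigroup in `DA`, every regular J-class consists entirely of
idempotents: if a J-class contains an idempotent `e`, then every element
J-equivalent to `e` is idempotent. -/
theorem stmt18 {S : Type*} [Semigroup S] [Fintype S]
    (hDA : ∀ x y e : S, (∃ n : ℕ, spow (x * y) n = e) → IsIdempotentElem e →
      e * x * e = e) :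
    ∀ e x : S, IsIdempotentElem e → leJmem e x → leJmem x e →
      IsIdempotentElem x := by
  intro e x hee hex hxe
  haveI : Finite (WithOne S) := inferInstanceAs (Finite (Option S))
  obtain ⟨a, b, hab⟩ := leJ_coe hex   -- ↑e = a * ↑x * b
  obtain ⟨c, d, hcd⟩ := leJ_coe hxe   -- ↑x = c * ↑e * d
  have hE : (e : WithOne S) * ↑e = ↑e := by rw [← WithOne.coe_mul, hee.eq]
  have hstep : (c * ↑e * a) * (x : WithOne S) * (b * ↑e * d) = ↑x := by
    calc (c * ↑e * a) * (x : WithOne S) * (b * ↑e * d)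
        = c * (↑e * (a * ↑x * b) * (↑e * d)) := by simp only [mul_assoc]
      _ = c * (↑e * ↑e * (↑e * d)) := by rw [← hab]
      _ = c * (↑e * (↑e * d)) := by rw [hE]
      _ = c * (↑e * d) := by
          rw [show ((e : WithOne S) * (↑e * d)) = ↑e * d from by rw [← mul_assoc, hE]]
      _ = ↑x := by rw [← mul_assoc, ← hcd]
  have hPXQ := sandwich_pow hstep
  obtain ⟨N, hN2, hNidem⟩ := exists_idem_pow (b * ↑e * d : WithOne S)
  have hXQ : (x : WithOne S) * (b * ↑e * d) ^ N = ↑x := by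
    calc (x : WithOne S) * (b * ↑e * d) ^ N
        = ((c * ↑e * a) ^ N * ↑x * (b * ↑e * d) ^ N) * (b * ↑e * d) ^ N := by rw [hPXQ N]
      _ = (c * ↑e * a) ^ N * ↑x * ((b * ↑e * d) ^ N * (b * ↑e * d) ^ N) := by
          simp only [mul_assoc]
      _ = (c * ↑e * a) ^ N * ↑x * (b * ↑e * d) ^ N := by rw [hNidem]
      _ = ↑x := hPXQ N
  obtain ⟨m, rfl⟩ : ∃ m, N = m + 2 := ⟨N - 2, by omega⟩
  obtain ⟨R, hRz, hXR⟩ : ∃ R : WithOne S,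
      (∃ z, R = b * ((e : WithOne S) * z)) ∧
        (x : WithOne S) = ↑x * R * (b * ↑e * d) := by
    refine ⟨(b * ↑e * d) ^ (m + 1),
      ⟨d * (b * ↑e * d) ^ m, by rw [pow_succ']; simp only [mul_assoc]⟩, ?_⟩
    rw [mul_assoc, ← pow_succ]
    exact hXQ.symm
  rw [hab] at hXR
  -- hXR : ↑x = ↑x * R * (b * (a * ↑x * b) * d)
  have hstep3 : (x : WithOne S) * (R * (b * a)) * ↑x * (b * d) = ↑x := by
    calc (x : WithOne S) * (R * (b * a)) * ↑x * (b * d)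
        = ↑x * R * (b * (a * ↑x * b) * d) := by simp only [mul_assoc]
      _ = ↑x := hXR.symm
  have h3 := sandwich_pow hstep3
  obtain ⟨n2, hn2, hFidem⟩ := exists_idem_pow ((x : WithOne S) * (R * (b * a)))
  obtain ⟨k2, rfl⟩ : ∃ k2, n2 = k2 + 1 := ⟨n2 - 1, by omega⟩
  have hFX : ((x : WithOne S) * (R * (b * a))) ^ (k2 + 1) * ↑x = ↑x := by
    calc ((x : WithOne S) * (R * (b * a))) ^ (k2 + 1) * ↑x
        = ((x : WithOne S) * (R * (b * a))) ^ (k2 + 1) *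
            (((x : WithOne S) * (R * (b * a))) ^ (k2 + 1) * ↑x * (b * d) ^ (k2 + 1)) := by
          rw [h3 (k2 + 1)]
      _ = (((x : WithOne S) * (R * (b * a))) ^ (k2 + 1) *
            ((x : WithOne S) * (R * (b * a))) ^ (k2 + 1)) * ↑x * (b * d) ^ (k2 + 1) := by
          simp only [mul_assoc]
      _ = ((x : WithOne S) * (R * (b * a))) ^ (k2 + 1) * ↑x * (b * d) ^ (k2 + 1) := by
          rw [hFidem]
      _ = ↑x := h3 (k2 + 1)
  -- identify s₀ ∈ S with R * (b * a)
  obtain ⟨z, hz⟩ := hRz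
  obtain ⟨v, hv⟩ := coe_mul_right_absorb e (z * (b * a))
  obtain ⟨s₀, hs₀'⟩ := coe_mul_left_absorb v b
  have hs₀ : R * (b * a) = ((s₀ : S) : WithOne S) := by
    calc R * (b * a) = b * (↑e * (z * (b * a))) := by rw [hz]; simp only [mul_assoc]
      _ = b * ↑v := by rw [hv]
      _ = ↑s₀ := hs₀'
  have hxs : ((x : WithOne S) * (R * (b * a))) = ↑(x * s₀) := by
    rw [hs₀, WithOne.coe_mul]
  rw [hxs] at hFX hFidem
  have hcp := coe_spow (x * s₀) k2
  rw [← hcp] at hFX hFidem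
  set f := spow (x * s₀) k2 with hf
  have hfx : f * x = x := by
    rw [← WithOne.coe_mul] at hFX
    exact WithOne.coe_inj.mp hFX
  have hff : IsIdempotentElem f := by
    rw [← WithOne.coe_mul] at hFidem
    exact WithOne.coe_inj.mp hFidem
  have hfxf : f * x * f = f := hDA x s₀ f ⟨k2, rfl⟩ hff
  show x * x = x
  calc x * x = (f * x) * (f * x) := by rw [hfx]
    _ = (f * x * f) * x := by simp only [mul_assoc]
    _ = f * x := by rw [hfxf]
    _ = x := hfx
end
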